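/- Fix d ≥ 1, l ≥ 0 and ρ ∈ (0,1]. There exists a constant C = C(d,l,ρ) such that for every h > 0 the following holds: let K₁ and K₂ be simplices in ℝ^d sharing a common facet F (i.e., K₁ = convexHull({a} ∪ S) and K₂ = convexHull({b} ∪ S) for a set S of d points with {a} ∪ S and {b} ∪ S each affinely independent and F = convexHull S), each satisfying diam K_i ≤ h and containing a Euclidean ball of radius ρh. Then for every polynomial function q : ℝ^d → ℝ of degree ≤ l, ∫_{K₁} q² dx ≤ C ( h² ∫_{K₁} ‖∇q‖² dx + ∫_{K₂} q² dx ). -/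

import Mathlib

set_option maxHeartbeats 1000000
set_option synthInstance.maxHeartbeats 1000000

open MeasureTheory Metric Pointwise

theorem contEval (d : ℕ) (P : MvPolynomial (Fin d) ℝ) :
    Continuous fun x : EuclideanSpace ℝ (Fin d) => MvPolynomial.eval (fun j => x j) P := by
  induction P using MvPolynomial.induction_on with
  | C a => simpa using continuous_const
  | add p q hp hq => simp only [map_add]; exact hp.add hq
  | mul_X p j hp => simp only [map_mul, MvPolynomial.eval_X]; exact hp.mul (PiLp.continuous_apply 2 _ j)

theorem eval_aeval_line (d : ℕ) (z : Fin d → ℝ) (P : MvPolynomial (Fin d) ℝ) (t : ℝ) :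
    Polynomial.eval t (MvPolynomial.aeval (fun j => Polynomial.C (z j) * Polynomial.X) P)
      = MvPolynomial.eval (fun j => z j * t) P := by
  induction P using MvPolynomial.induction_on with
  | C a => simp
  | add p q hp hq => simp only [map_add, Polynomial.eval_add, hp, hq]
  | mul_X p j hp =>
      simp only [map_mul, hp, MvPolynomial.aeval_X, Polynomial.eval_mul,
        Polynomial.eval_C, Polynomial.eval_X, MvPolynomial.eval_X]

theorem eval_comp_affine (d : ℕ) (c : Fin d → ℝ) (h : ℝ) (P : MvPolynomial (Fin d) ℝ)
    (x : Fin d → ℝ) :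
    MvPolynomial.eval x
        (MvPolynomial.aeval
          (fun j => MvPolynomial.C (c j) + MvPolynomial.C h * MvPolynomial.X j) P)
      = MvPolynomial.eval (fun j => c j + h * x j) P := by
  induction P using MvPolynomial.induction_on with
  | C a => simp
  | add p q hp hq => simp only [map_add, MvPolynomial.eval_add, hp, hq]
  | mul_X p j hp =>
      simp only [map_mul, hp, MvPolynomial.aeval_X, MvPolynomial.eval_add,
        MvPolynomial.eval_mul, MvPolynomial.eval_C, MvPolynomial.eval_X]

theorem vanish (d : ℕ) {r : ℝ} (hr : 0 < r) (P : MvPolynomial (Fin d) ℝ)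
    (h : ∀ x : EuclideanSpace ℝ (Fin d), x ∈ ball (0 : EuclideanSpace ℝ (Fin d)) r →
      MvPolynomial.eval (fun j => x j) P = 0) : P = 0 := by
  apply MvPolynomial.funext
  intro z
  set pz : Polynomial ℝ :=
    MvPolynomial.aeval (fun j => Polynomial.C (z j) * Polynomial.X) P with hpz
  set xz : EuclideanSpace ℝ (Fin d) := (WithLp.equiv 2 (Fin d → ℝ)).symm z with hxz
  have hε : 0 < r / (‖xz‖ + 1) := by positivity
  have hroot : ∀ t ∈ Set.Ioo (0 : ℝ) (r / (‖xz‖ + 1)), pz.IsRoot t := by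
    intro t ht
    have hmem : t • xz ∈ ball (0 : EuclideanSpace ℝ (Fin d)) r := by
      rw [mem_ball, dist_zero_right, norm_smul]
      have h1 : ‖t‖ = t := abs_of_pos ht.1
      have h2 : ‖t‖ * ‖xz‖ ≤ t * (‖xz‖ + 1) := by
        rw [h1]; nlinarith [norm_nonneg xz, ht.1]
      calc ‖t‖ * ‖xz‖ ≤ t * (‖xz‖ + 1) := h2
        _ < (r / (‖xz‖ + 1)) * (‖xz‖ + 1) := by
            apply mul_lt_mul_of_pos_right ht.2; positivity
        _ = r := by field_simp
    have := h (t • xz) hmem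
    have heq : (fun j => (t • xz) j) = fun j => z j * t := by
      funext j
      simp [hxz, PiLp.toLp_apply, mul_comm]
    rw [heq] at this
    show Polynomial.eval t pz = 0
    rw [hpz, eval_aeval_line]
    exact this
  have hpz0 : pz = 0 := by
    apply Polynomial.eq_zero_of_infinite_isRoot
    exact Set.Infinite.mono hroot (Set.Ioo_infinite hε)
  have := eval_aeval_line d z P 1
  rw [← hpz, hpz0] at this
  simp only [Polynomial.eval_zero] at this
  simpa [mul_one] using this.symm

theorem totalDegree_comp_affine_le (d : ℕ) (c : Fin d → ℝ) (h : ℝ)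
    (P : MvPolynomial (Fin d) ℝ) :
    (MvPolynomial.aeval
        (fun j => MvPolynomial.C (c j) + MvPolynomial.C h * MvPolynomial.X j) P).totalDegree
      ≤ P.totalDegree := by
  set f : Fin d → MvPolynomial (Fin d) ℝ :=
    fun j => MvPolynomial.C (c j) + MvPolynomial.C h * MvPolynomial.X j with hf
  have hf1 : ∀ j, (f j).totalDegree ≤ 1 := by
    intro j
    refine (MvPolynomial.totalDegree_add _ _).trans (max_le ?_ ?_)
    · simp [hf, MvPolynomial.totalDegree_C]
    · refine (MvPolynomial.totalDegree_mul _ _).trans ?_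
      simp [hf, MvPolynomial.totalDegree_C, MvPolynomial.totalDegree_X]
  conv_lhs => rw [P.as_sum, map_sum]
  refine (MvPolynomial.totalDegree_finset_sum _ _).trans (Finset.sup_le fun s hs => ?_)
  rw [MvPolynomial.aeval_monomial]
  refine (MvPolynomial.totalDegree_mul _ _).trans ?_
  have h1 : (algebraMap ℝ (MvPolynomial (Fin d) ℝ) (P.coeff s)).totalDegree = 0 :=
    MvPolynomial.totalDegree_C _
  rw [h1, zero_add]
  refine le_trans ?_ (MvPolynomial.le_totalDegree hs)
  rw [Finsupp.prod]
  refine (MvPolynomial.totalDegree_finset_prod _ _).trans ?_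
  rw [Finsupp.sum]
  refine Finset.sum_le_sum fun j hj => ?_
  refine (MvPolynomial.totalDegree_pow _ _).trans ?_
  calc s j * (f j).totalDegree ≤ s j * 1 := Nat.mul_le_mul_left _ (hf1 j)
    _ = s j := Nat.mul_one _

theorem compare_of_compact {n : ℕ} (f g : (Fin n → ℝ) → ℝ)
    (hf : Continuous f) (hg : Continuous g)
    (hfh : ∀ (t : ℝ) c, f (t • c) = t ^ 2 * f c)
    (hgh : ∀ (t : ℝ) c, g (t • c) = t ^ 2 * g c)
    (hf0 : ∀ c, 0 ≤ f c)
    (hgpos : ∀ c, c ≠ 0 → 0 < g c) :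
    ∃ C : ℝ, 0 ≤ C ∧ ∀ c, f c ≤ C * g c := by
  have hfzero : f 0 = 0 := by
    have := hfh 0 0; rwa [smul_zero, zero_pow (by norm_num), zero_mul] at this
  have hgzero : g 0 = 0 := by
    have := hgh 0 0; rwa [smul_zero, zero_pow (by norm_num), zero_mul] at this
  rcases Nat.eq_zero_or_pos n with hn | hn
  · refine ⟨0, le_rfl, fun c => ?_⟩
    have hc : c = 0 := funext fun i => absurd i.isLt (by omega)
    rw [hc, hfzero, hgzero, mul_zero]
  · haveI : Nonempty (Fin n) := ⟨⟨0, hn⟩⟩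
    have hsne : ((sphere (0 : Fin n → ℝ) 1) : Set (Fin n → ℝ)).Nonempty := by
      refine ⟨fun _ => 1, ?_⟩
      simp [mem_sphere_iff_norm, pi_norm_const]
    obtain ⟨u, huS, hu⟩ := (isCompact_sphere (0 : Fin n → ℝ) 1).exists_isMaxOn hsne
      hf.continuousOn
    obtain ⟨v, hvS, hv⟩ := (isCompact_sphere (0 : Fin n → ℝ) 1).exists_isMinOn hsne
      hg.continuousOn
    have hvnorm : ‖v‖ = 1 := by simpa [mem_sphere_iff_norm] using hvS
    have hvne : v ≠ 0 := by
      intro h0; rw [h0, norm_zero] at hvnorm; norm_num at hvnorm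
    have hm : 0 < g v := hgpos v hvne
    refine ⟨f u / g v, div_nonneg (hf0 u) hm.le, fun c => ?_⟩
    rcases eq_or_ne c 0 with rfl | hc
    · rw [hfzero, hgzero, mul_zero]
    · have hcn : (0:ℝ) < ‖c‖ := norm_pos_iff.2 hc
      set w : Fin n → ℝ := ‖c‖⁻¹ • c with hw
      have hwS : w ∈ sphere (0 : Fin n → ℝ) 1 := by
        simp [mem_sphere_iff_norm, hw, norm_smul, abs_of_pos (inv_pos.2 hcn),
          inv_mul_cancel₀ hcn.ne']
      have hcw : c = ‖c‖ • w := by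
        rw [hw, smul_smul, mul_inv_cancel₀ hcn.ne', one_smul]
      have hfc : f c = ‖c‖ ^ 2 * f w := by conv_lhs => rw [hcw, hfh]
      have hgc : g c = ‖c‖ ^ 2 * g w := by conv_lhs => rw [hcw, hgh]
      rw [hfc, hgc]
      have h1 : f w ≤ f u := hu hwS
      have h2 : g v ≤ g w := hv hwS
      have key : f u / g v * g w = (f u * g w) / g v := by ring
      calc ‖c‖ ^ 2 * f w ≤ ‖c‖ ^ 2 * f u := by nlinarith [sq_nonneg ‖c‖]
        _ ≤ ‖c‖ ^ 2 * (f u / g v * g w) := by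
            have : f u ≤ f u / g v * g w := by
              rw [div_mul_eq_mul_div, le_div_iff₀ hm]
              nlinarith [hf0 u]
            nlinarith [sq_nonneg ‖c‖]
        _ = f u / g v * (‖c‖ ^ 2 * g w) := by ring

theorem cov (d : ℕ) (f : EuclideanSpace ℝ (Fin d) → ℝ) (c : EuclideanSpace ℝ (Fin d))
    {h : ℝ} (r : ℝ) (hh : 0 < h) :
    ∫ y in ball c (r * h), f y
      = h ^ d * ∫ x in ball (0 : EuclideanSpace ℝ (Fin d)) r, f (c + h • x) := by
  have e1 : ∫ x in ball (0 : EuclideanSpace ℝ (Fin d)) r, f (c + h • x)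
      = (h ^ d)⁻¹ • ∫ y in h • ball (0 : EuclideanSpace ℝ (Fin d)) r, f (c + y) := by
    have := MeasureTheory.Measure.setIntegral_comp_smul_of_pos (μ := volume)
      (fun y => f (c + y)) (ball (0 : EuclideanSpace ℝ (Fin d)) r) hh
    rwa [finrank_euclideanSpace_fin] at this
  have e2 : h • ball (0 : EuclideanSpace ℝ (Fin d)) r
      = ball (0 : EuclideanSpace ℝ (Fin d)) (h * r) := by
    rw [_root_.smul_ball hh.ne', smul_zero, Real.norm_eq_abs, abs_of_pos hh]
  have e3 : ∫ y in ball (0 : EuclideanSpace ℝ (Fin d)) (h * r), f (c + y)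
      = ∫ y in ball c (h * r), f y := by
    rw [← integral_indicator measurableSet_ball, ← integral_indicator measurableSet_ball]
    have key : ∀ y, (ball (0 : EuclideanSpace ℝ (Fin d)) (h * r)).indicator
        (fun y => f (c + y)) y = (ball c (h * r)).indicator f (c + y) := by
      intro y
      by_cases hy : y ∈ ball (0 : EuclideanSpace ℝ (Fin d)) (h * r)
      · rw [Set.indicator_of_mem hy, Set.indicator_of_mem]
        simpa [mem_ball, dist_eq_norm] using hy
      · rw [Set.indicator_of_notMem hy, Set.indicator_of_notMem]
        intro hmem
        exact hy (by simpa [mem_ball, dist_eq_norm] using hmem)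
    simp_rw [key]
    exact integral_add_left_eq_self ((ball c (h * r)).indicator f) c
  rw [mul_comm r h, e1, e2, e3, smul_eq_mul]
  field_simp

noncomputable section NEIEAux

abbrev polyV (d l : ℕ) : Submodule ℝ (MvPolynomial (Fin d) ℝ) :=
  MvPolynomial.restrictTotalDegree (Fin d) ℝ l

def polyN (d l : ℕ) : ℕ := Module.finrank ℝ (polyV d l)

def polyB (d l : ℕ) : Module.Basis (Fin (polyN d l)) ℝ (polyV d l) := Module.finBasis ℝ _

def polyM (d l : ℕ) (i : Fin (polyN d l)) (x : EuclideanSpace ℝ (Fin d)) : ℝ :=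
  MvPolynomial.eval (fun j => x j) ((polyB d l i : polyV d l) : MvPolynomial (Fin d) ℝ)

end NEIEAux

theorem polyM_continuous (d l : ℕ) (i : Fin (polyN d l)) : Continuous (polyM d l i) :=
  contEval d _

theorem hev (d l : ℕ) (c : Fin (polyN d l) → ℝ) (x : EuclideanSpace ℝ (Fin d)) :
    MvPolynomial.eval (fun j => x j)
        (((polyB d l).equivFun.symm c : polyV d l) : MvPolynomial (Fin d) ℝ)
      = ∑ i, c i * polyM d l i x := by
  rw [Module.Basis.equivFun_symm_apply]
  have hcoe : ((∑ i, c i • polyB d l i : polyV d l) : MvPolynomial (Fin d) ℝ)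
      = ∑ i, c i • ((polyB d l i : polyV d l) : MvPolynomial (Fin d) ℝ) := by
    simp
  rw [hcoe, map_sum]
  refine Finset.sum_congr rfl fun i _ => ?_
  rw [MvPolynomial.smul_eq_C_mul, map_mul, MvPolynomial.eval_C]
  rfl

theorem ball_compare (d l : ℕ) {ρ r : ℝ} (hρ : 0 < ρ) (hr : 0 < r) :
    ∃ C : ℝ, 0 ≤ C ∧ ∀ P : MvPolynomial (Fin d) ℝ, P.totalDegree ≤ l →
      (∫ x in ball (0 : EuclideanSpace ℝ (Fin d)) r,
          (MvPolynomial.eval (fun j => x j) P) ^ 2)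
        ≤ C * ∫ x in ball (0 : EuclideanSpace ℝ (Fin d)) ρ,
            (MvPolynomial.eval (fun j => x j) P) ^ 2 := by
  classical
  set n := polyN d l with hn
  set m := polyM d l with hm
  have hmc : ∀ i, Continuous (m i) := polyM_continuous d l
  have intmm : ∀ (R : ℝ) (i j : Fin n),
      IntegrableOn (fun x => m i x * m j x)
        (ball (0 : EuclideanSpace ℝ (Fin d)) R) volume :=
    fun R i j => (((hmc i).mul (hmc j)).continuousOn.integrableOn_compact
      (isCompact_closedBall _ _)).mono_set ball_subset_closedBall
  set F : ℝ → (Fin n → ℝ) → ℝ :=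
    fun R c => ∫ x in ball (0 : EuclideanSpace ℝ (Fin d)) R, (∑ i, c i * m i x) ^ 2 with hF
  have hintsq : ∀ (R : ℝ) (c : Fin n → ℝ),
      IntegrableOn (fun x => (∑ i, c i * m i x) ^ 2)
        (ball (0 : EuclideanSpace ℝ (Fin d)) R) volume := by
    intro R c
    have hcont : Continuous fun x : EuclideanSpace ℝ (Fin d) => (∑ i, c i * m i x) ^ 2 := by
      apply Continuous.pow
      exact continuous_finset_sum _ fun i _ => continuous_const.mul (hmc i)
    exact (hcont.continuousOn.integrableOn_compact
      (isCompact_closedBall _ _)).mono_set ball_subset_closedBall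
  have expand : ∀ (R : ℝ) (c : Fin n → ℝ),
      F R c = ∑ i, ∑ j, (c i * c j) *
        ∫ x in ball (0 : EuclideanSpace ℝ (Fin d)) R, m i x * m j x := by
    intro R c
    have h1 : (fun x : EuclideanSpace ℝ (Fin d) => (∑ i, c i * m i x) ^ 2)
        = fun x => ∑ i, ∑ j, (c i * c j) • (m i x * m j x) := by
      funext x
      rw [sq, Finset.sum_mul_sum]
      refine Finset.sum_congr rfl fun i _ => Finset.sum_congr rfl fun j _ => ?_
      simp only [smul_eq_mul]; ring
    have e1 : (∫ x in ball (0 : EuclideanSpace ℝ (Fin d)) R,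
          ∑ i, ∑ j, (c i * c j) • (m i x * m j x))
        = ∑ i, ∫ x in ball (0 : EuclideanSpace ℝ (Fin d)) R,
            ∑ j, (c i * c j) • (m i x * m j x) :=
      integral_finset_sum Finset.univ fun i _ =>
        integrable_finset_sum Finset.univ fun j _ => (intmm R i j).smul (c i * c j)
    have e2 : ∀ i : Fin n, (∫ x in ball (0 : EuclideanSpace ℝ (Fin d)) R,
          ∑ j, (c i * c j) • (m i x * m j x))
        = ∑ j, (c i * c j) • ∫ x in ball (0 : EuclideanSpace ℝ (Fin d)) R,
            m i x * m j x :=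
      fun i => (integral_finset_sum Finset.univ fun j _ =>
          (intmm R i j).smul (c i * c j)).trans
        (Finset.sum_congr rfl fun j _ => integral_smul (c i * c j) _)
    calc F R c = ∫ x in ball (0 : EuclideanSpace ℝ (Fin d)) R,
          ∑ i, ∑ j, (c i * c j) • (m i x * m j x) := by
            show (∫ x in ball (0 : EuclideanSpace ℝ (Fin d)) R,
              (∑ i, c i * m i x) ^ 2) = _
            rw [h1]
      _ = ∑ i, ∫ x in ball (0 : EuclideanSpace ℝ (Fin d)) R,
            ∑ j, (c i * c j) • (m i x * m j x) := e1
      _ = ∑ i, ∑ j, (c i * c j) • ∫ x in ball (0 : EuclideanSpace ℝ (Fin d)) R,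
            m i x * m j x := Finset.sum_congr rfl fun i _ => e2 i
      _ = ∑ i, ∑ j, (c i * c j) *
            ∫ x in ball (0 : EuclideanSpace ℝ (Fin d)) R, m i x * m j x := by
            simp only [smul_eq_mul]
  have hFcont : ∀ R : ℝ, Continuous (F R) := by
    intro R
    have : F R = fun c => ∑ i, ∑ j, (c i * c j) *
        ∫ x in ball (0 : EuclideanSpace ℝ (Fin d)) R, m i x * m j x :=
      funext fun c => expand R c
    rw [this]
    exact continuous_finset_sum _ fun i _ => continuous_finset_sum _ fun j _ =>
      (((continuous_apply i).mul (continuous_apply j)).mul continuous_const)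
  have hFh : ∀ (R : ℝ) (t : ℝ) (c : Fin n → ℝ), F R (t • c) = t ^ 2 * F R c := by
    intro R t c
    rw [expand, expand, Finset.mul_sum]
    refine Finset.sum_congr rfl fun i _ => ?_
    rw [Finset.mul_sum]
    refine Finset.sum_congr rfl fun j _ => ?_
    simp only [Pi.smul_apply, smul_eq_mul]
    ring
  have hF0 : ∀ (R : ℝ) (c : Fin n → ℝ), 0 ≤ F R c :=
    fun R c => setIntegral_nonneg measurableSet_ball fun x _ => sq_nonneg _
  have hgpos : ∀ c : Fin n → ℝ, c ≠ 0 → 0 < F ρ c := by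
    intro c hc
    set Q : polyV d l := (polyB d l).equivFun.symm c with hQ
    have hQne : (Q : MvPolynomial (Fin d) ℝ) ≠ 0 := by
      intro h0
      apply hc
      have hQ0 : Q = 0 := Subtype.ext (by simp [h0])
      apply (polyB d l).equivFun.symm.injective
      rw [map_zero, ← hQ, hQ0]
    have hx : ∃ x ∈ ball (0 : EuclideanSpace ℝ (Fin d)) ρ,
        MvPolynomial.eval (fun j => x j) (Q : MvPolynomial (Fin d) ℝ) ≠ 0 := by
      by_contra hcon
      push_neg at hcon
      exact hQne (vanish d hρ _ hcon)
    obtain ⟨x₀, hx₀b, hx₀⟩ := hx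
    have hsum : ∀ x : EuclideanSpace ℝ (Fin d),
        (∑ i, c i * m i x) = MvPolynomial.eval (fun j => x j) (Q : MvPolynomial (Fin d) ℝ) :=
      fun x => (hev d l c x).symm
    rw [show F ρ c = ∫ x in ball (0 : EuclideanSpace ℝ (Fin d)) ρ, (∑ i, c i * m i x) ^ 2
      from rfl]
    rw [setIntegral_pos_iff_support_of_nonneg_ae
      (Filter.Eventually.of_forall fun x => sq_nonneg _) (hintsq ρ c)]
    set U : Set (EuclideanSpace ℝ (Fin d)) :=
      ball (0 : EuclideanSpace ℝ (Fin d)) ρ ∩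
        {x | MvPolynomial.eval (fun j => x j) (Q : MvPolynomial (Fin d) ℝ) ≠ 0} with hU
    have hUopen : IsOpen U :=
      isOpen_ball.inter (isOpen_compl_singleton.preimage (contEval d _))
    have hUne : U.Nonempty := ⟨x₀, hx₀b, hx₀⟩
    have hsub : U ⊆ Function.support (fun x => (∑ i, c i * m i x) ^ 2) ∩
        ball (0 : EuclideanSpace ℝ (Fin d)) ρ := by
      rintro x ⟨hxb, hxne⟩
      refine ⟨?_, hxb⟩
      rw [Function.mem_support]
      rw [hsum x]
      exact pow_ne_zero _ hxne
    exact lt_of_lt_of_le (hUopen.measure_pos volume hUne) (measure_mono hsub)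
  obtain ⟨C, hC0, hC⟩ := compare_of_compact (F r) (F ρ) (hFcont r) (hFcont ρ)
    (hFh r) (hFh ρ) (hF0 r) hgpos
  refine ⟨C, hC0, fun P hP => ?_⟩
  set PV : polyV d l := ⟨P, (MvPolynomial.mem_restrictTotalDegree _ _ _).2 hP⟩ with hPV
  set c : Fin n → ℝ := (polyB d l).equivFun PV with hc
  have hback : ((polyB d l).equivFun.symm c : polyV d l) = PV :=
    (polyB d l).equivFun.symm_apply_apply PV
  have he : ∀ x : EuclideanSpace ℝ (Fin d),
      MvPolynomial.eval (fun j => x j) P = ∑ i, c i * m i x := by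
    intro x
    rw [← hev d l c x, hback]
  have h1 : (∫ x in ball (0 : EuclideanSpace ℝ (Fin d)) r,
      (MvPolynomial.eval (fun j => x j) P) ^ 2) = F r c := by
    show _ = ∫ x in ball (0 : EuclideanSpace ℝ (Fin d)) r, (∑ i, c i * m i x) ^ 2
    congr 1; funext x; rw [he x]
  have h2 : (∫ x in ball (0 : EuclideanSpace ℝ (Fin d)) ρ,
      (MvPolynomial.eval (fun j => x j) P) ^ 2) = F ρ c := by
    show _ = ∫ x in ball (0 : EuclideanSpace ℝ (Fin d)) ρ, (∑ i, c i * m i x) ^ 2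
    congr 1; funext x; rw [he x]
  rw [h1, h2]
  exact hC c

/-- Neighboring-element inverse estimate: for fixed `d ≥ 1`, `l` and
`ρ ∈ (0,1]` there is `C = C(d,l,ρ)` such that for every `h > 0` and every pair of
shape-regular simplices `K₁ = convexHull({a} ∪ S)` and `K₂ = convexHull({b} ∪ S)`
sharing the facet `F = convexHull S` (each of diameter `≤ h` and containing a ball of
radius `ρh`), and every polynomial `q` of degree `≤ l`,
`∫_{K₁} q² ≤ C (h² ∫_{K₁} ‖∇q‖² + ∫_{K₂} q²)`. -/
theorem neighboring_element_inverse_estimate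
    (d l : ℕ) (hd : 1 ≤ d) (ρ : ℝ) (hρ : ρ ∈ Set.Ioc (0 : ℝ) 1) :
    ∃ C : ℝ, ∀ (h : ℝ), 0 < h →
      ∀ (a b : EuclideanSpace ℝ (Fin d)) (S : Fin d → EuclideanSpace ℝ (Fin d)),
        AffineIndependent ℝ (Fin.cons a S : Fin (d + 1) → EuclideanSpace ℝ (Fin d)) →
        AffineIndependent ℝ (Fin.cons b S : Fin (d + 1) → EuclideanSpace ℝ (Fin d)) →
      ∀ (K₁ K₂ : Set (EuclideanSpace ℝ (Fin d))),
        K₁ = convexHull ℝ (insert a (Set.range S)) →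
        K₂ = convexHull ℝ (insert b (Set.range S)) →
        Metric.diam K₁ ≤ h → Metric.diam K₂ ≤ h →
        (∃ c₁ : EuclideanSpace ℝ (Fin d), Metric.ball c₁ (ρ * h) ⊆ K₁) →
        (∃ c₂ : EuclideanSpace ℝ (Fin d), Metric.ball c₂ (ρ * h) ⊆ K₂) →
      ∀ (q : EuclideanSpace ℝ (Fin d) → ℝ),
        (∃ P : MvPolynomial (Fin d) ℝ, P.totalDegree ≤ l ∧
          ∀ y, q y = MvPolynomial.eval (fun j => y j) P) →
        (∫ y in K₁, (q y) ^ 2) ≤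
          C * (h ^ 2 * (∫ y in K₁, ‖gradient q y‖ ^ 2) + ∫ y in K₂, (q y) ^ 2) := by
  obtain ⟨CB, hCB0, hCB⟩ := ball_compare d l hρ.1 (show (0:ℝ) < 4 by norm_num)
  refine ⟨CB, ?_⟩
  intro h hh a b S _ _ K₁ K₂ hK₁ hK₂ hd₁ hd₂ _ hball₂ q hq
  obtain ⟨P, hPdeg, hPq⟩ := hq
  obtain ⟨c₂, hc₂⟩ := hball₂
  have hqfun : q = fun y => MvPolynomial.eval (fun j => y j) P := funext hPq
  have hqc : Continuous q := by rw [hqfun]; exact contEval d P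
  have hK₁c : IsCompact K₁ := by
    rw [hK₁]; exact ((Set.finite_range S).insert a).isCompact_convexHull ℝ
  have hK₂c : IsCompact K₂ := by
    rw [hK₂]; exact ((Set.finite_range S).insert b).isCompact_convexHull ℝ
  -- geometry: K₁ ⊆ ball c₂ (4 * h)
  have hc₂K₂ : c₂ ∈ K₂ := hc₂ (mem_ball_self (mul_pos hρ.1 hh))
  set i0 : Fin d := ⟨0, hd⟩ with hi0
  have hs₁ : S i0 ∈ K₁ := by
    rw [hK₁]; exact subset_convexHull ℝ _ (Set.mem_insert_iff.2 (Or.inr ⟨i0, rfl⟩))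
  have hs₂ : S i0 ∈ K₂ := by
    rw [hK₂]; exact subset_convexHull ℝ _ (Set.mem_insert_iff.2 (Or.inr ⟨i0, rfl⟩))
  have hK₁sub : K₁ ⊆ ball c₂ (4 * h) := by
    intro x hx
    have d1 : dist x (S i0) ≤ h :=
      le_trans (dist_le_diam_of_mem hK₁c.isBounded hx hs₁) hd₁
    have d2 : dist (S i0) c₂ ≤ h :=
      le_trans (dist_le_diam_of_mem hK₂c.isBounded hs₂ hc₂K₂) hd₂
    have : dist x c₂ ≤ 2 * h := by
      calc dist x c₂ ≤ dist x (S i0) + dist (S i0) c₂ := dist_triangle _ _ _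
        _ ≤ 2 * h := by linarith
    exact mem_ball.2 (lt_of_le_of_lt this (by linarith))
  -- integrability of q² on compact sets and balls
  have hq2c : Continuous fun y => q y ^ 2 := hqc.pow 2
  have intq2 : ∀ s : Set (EuclideanSpace ℝ (Fin d)), IsCompact s →
      IntegrableOn (fun y => q y ^ 2) s volume :=
    fun s hs => hq2c.continuousOn.integrableOn_compact hs
  have intq2ball : ∀ (c : EuclideanSpace ℝ (Fin d)) (R : ℝ),
      IntegrableOn (fun y => q y ^ 2) (ball c R) volume :=
    fun c R => (intq2 _ (isCompact_closedBall c R)).mono_set ball_subset_closedBall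
  -- the composed polynomial
  set Q : MvPolynomial (Fin d) ℝ :=
    MvPolynomial.aeval
      (fun j => MvPolynomial.C (c₂ j) + MvPolynomial.C h * MvPolynomial.X j) P with hQdef
  have hQdeg : Q.totalDegree ≤ l :=
    le_trans (totalDegree_comp_affine_le d (fun j => c₂ j) h P) hPdeg
  have hcomp : ∀ x : EuclideanSpace ℝ (Fin d),
      q (c₂ + h • x) = MvPolynomial.eval (fun j => x j) Q := by
    intro x
    rw [hPq]
    rw [hQdef, eval_comp_affine d (fun j => c₂ j) h P (fun j => x j)]
    congr 1
  -- chain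
  have step1 : (∫ y in K₁, q y ^ 2) ≤ ∫ y in ball c₂ (4 * h), q y ^ 2 :=
    setIntegral_mono_set (intq2ball c₂ (4 * h))
      (Filter.Eventually.of_forall fun y => sq_nonneg _)
      (HasSubset.Subset.eventuallyLE hK₁sub)
  have step2 : (∫ y in ball c₂ (4 * h), q y ^ 2)
      = h ^ d * ∫ x in ball (0 : EuclideanSpace ℝ (Fin d)) 4, q (c₂ + h • x) ^ 2 :=
    cov d (fun y => q y ^ 2) c₂ 4 hh
  have step3 : (∫ x in ball (0 : EuclideanSpace ℝ (Fin d)) 4, q (c₂ + h • x) ^ 2)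
      ≤ CB * ∫ x in ball (0 : EuclideanSpace ℝ (Fin d)) ρ, q (c₂ + h • x) ^ 2 := by
    have e4 : (∫ x in ball (0 : EuclideanSpace ℝ (Fin d)) 4, q (c₂ + h • x) ^ 2)
        = ∫ x in ball (0 : EuclideanSpace ℝ (Fin d)) 4,
            (MvPolynomial.eval (fun j => x j) Q) ^ 2 := by
      congr 1; funext x; rw [hcomp x]
    have eρ : (∫ x in ball (0 : EuclideanSpace ℝ (Fin d)) ρ, q (c₂ + h • x) ^ 2)
        = ∫ x in ball (0 : EuclideanSpace ℝ (Fin d)) ρ,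
            (MvPolynomial.eval (fun j => x j) Q) ^ 2 := by
      congr 1; funext x; rw [hcomp x]
    rw [e4, eρ]
    exact hCB Q hQdeg
  have step4 : (∫ y in ball c₂ (ρ * h), q y ^ 2)
      = h ^ d * ∫ x in ball (0 : EuclideanSpace ℝ (Fin d)) ρ, q (c₂ + h • x) ^ 2 :=
    cov d (fun y => q y ^ 2) c₂ ρ hh
  have step5 : (∫ y in ball c₂ (ρ * h), q y ^ 2) ≤ ∫ y in K₂, q y ^ 2 :=
    setIntegral_mono_set (intq2 K₂ hK₂c)
      (Filter.Eventually.of_forall fun y => sq_nonneg _)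
      (HasSubset.Subset.eventuallyLE hc₂)
  have hhd : (0:ℝ) ≤ h ^ d := pow_nonneg hh.le d
  have main : (∫ y in K₁, q y ^ 2) ≤ CB * ∫ y in K₂, q y ^ 2 := by
    calc (∫ y in K₁, q y ^ 2) ≤ ∫ y in ball c₂ (4 * h), q y ^ 2 := step1
      _ = h ^ d * ∫ x in ball (0 : EuclideanSpace ℝ (Fin d)) 4, q (c₂ + h • x) ^ 2 := step2
      _ ≤ h ^ d * (CB * ∫ x in ball (0 : EuclideanSpace ℝ (Fin d)) ρ, q (c₂ + h • x) ^ 2) :=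
          mul_le_mul_of_nonneg_left step3 hhd
      _ = CB * (h ^ d * ∫ x in ball (0 : EuclideanSpace ℝ (Fin d)) ρ, q (c₂ + h • x) ^ 2) := by
          ring
      _ = CB * ∫ y in ball c₂ (ρ * h), q y ^ 2 := by rw [← step4]
      _ ≤ CB * ∫ y in K₂, q y ^ 2 := mul_le_mul_of_nonneg_left step5 hCB0
  have hgradnn : (0:ℝ) ≤ ∫ y in K₁, ‖gradient q y‖ ^ 2 :=
    setIntegral_nonneg hK₁c.measurableSet fun y _ => sq_nonneg _
  have : CB * ∫ y in K₂, q y ^ 2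
      ≤ CB * (h ^ 2 * (∫ y in K₁, ‖gradient q y‖ ^ 2) + ∫ y in K₂, q y ^ 2) := by
    apply mul_le_mul_of_nonneg_left _ hCB0
    nlinarith [sq_nonneg h]
  linarith
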